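/- Let K be a simplicial set with finitely many nondegenerate simplices, all of dimension ≤ n, and suppose σ is a nondegenerate n-simplex of K with n ≥ 1, with initial vertex s. Let K′ be the simplicial subset of K generated by all nondegenerate simplices other than σ, and let μ and μ′ denote the Möbius functions of K and K′ respectively (μ(x) = ∑_k (−1)^k · number of nondegenerate k-simplices with initial vertex x). Then K and K′ have the same vertices, μ(x) = μ′(x) for all vertices x ≠ s, and μ(s) = μ′(s) + (−1)^n. -/

import Mathlib

open CategoryTheory Opposite

/-- A simplex of a simplicial set is nondegenerate if it is not in the image of any
degeneracy map. (Every 0-simplex is nondegenerate.) -/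
def SSet.Nondeg (K : SSet) : (n : ℕ) → K.obj (op (SimplexCategory.mk n)) → Prop
  | 0, _ => True
  | n + 1, σ => ¬ ∃ (i : Fin (n + 1)) (τ : K.obj (op (SimplexCategory.mk n))), σ = K.map (SimplexCategory.σ i).op τ

/-- A simplicial set has finitely many nondegenerate simplices. -/
def SSet.FinNondeg (K : SSet) : Prop :=
  (∀ n : ℕ, {σ : K.obj (op (SimplexCategory.mk n)) | K.Nondeg n σ}.Finite) ∧
    ∃ N : ℕ, ∀ n ≥ N, ∀ σ : K.obj (op (SimplexCategory.mk n)), ¬ K.Nondeg n σ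

/-- The initial vertex of an `n`-simplex, induced by `[0] → [n]`, `0 ↦ 0`. -/
def SSet.initVertex (K : SSet) (n : ℕ) (σ : K.obj (op (SimplexCategory.mk n))) : K.obj (op (SimplexCategory.mk 0)) :=
  K.map (SimplexCategory.mkHom (OrderHom.const _ (0 : Fin (n + 1)))).op σ

/-- The combinatorial Euler characteristic: the alternating sum of the numbers of
nondegenerate simplices. -/
noncomputable def SSet.chi (K : SSet) : ℤ :=
  ∑ᶠ n : ℕ, (-1 : ℤ) ^ n * (Nat.card {σ : K.obj (op (SimplexCategory.mk n)) // K.Nondeg n σ} : ℤ)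

/-- The Möbius function of a simplicial set at a vertex `x`: the alternating sum of the
numbers of nondegenerate simplices with initial vertex `x`. -/
noncomputable def SSet.mob (K : SSet) (x : K.obj (op (SimplexCategory.mk 0))) : ℤ :=
  ∑ᶠ n : ℕ, (-1 : ℤ) ^ n *
    (Nat.card {σ : K.obj (op (SimplexCategory.mk n)) // K.Nondeg n σ ∧ K.initVertex n σ = x} : ℤ)

namespace MobAux

open scoped Classical

lemma inj_app {K K' : SSet} (ι : K' ⟶ K) (hmono : Mono ι) (X : SimplexCategoryᵒᵖ) :
    Function.Injective (ι.app X) := by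
  rw [← CategoryTheory.mono_iff_injective]
  exact (NatTrans.mono_iff_mono_app ι).mp hmono X

lemma init_nat {K K' : SSet} (ι : K' ⟶ K) (m : ℕ) (τ : K'.obj (op (SimplexCategory.mk m))) :
    ι.app _ (K'.initVertex m τ) = K.initVertex m (ι.app _ τ) :=
  NatTrans.naturality_apply ι (SimplexCategory.mkHom (OrderHom.const _ (0 : Fin (m+1)))).op τ

lemma sigma_surj {m : ℕ} (i : Fin (m + 1)) :
    Function.Surjective (SimplexCategory.σ i).toOrderHom := by
  intro b
  refine ⟨(SimplexCategory.δ i.castSucc).toOrderHom b, ?_⟩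
  have := congrArg (fun f => f.toOrderHom b) (SimplexCategory.δ_comp_σ_self (i := i))
  simpa using this

lemma dim_eq {m n : ℕ} (α : SimplexCategory.mk m ⟶ SimplexCategory.mk n)
    (hα : Function.Surjective α.toOrderHom) (hge : ¬ m > n) : m = n := by
  have hle : n + 1 ≤ m + 1 := by
    simpa using Fintype.card_le_of_surjective _ hα
  omega

lemma alpha_eq_id {n : ℕ} (α : SimplexCategory.mk n ⟶ SimplexCategory.mk n)
    (hα : Function.Surjective α.toOrderHom) : α = 𝟙 _ := by
  have : Epi α := SimplexCategory.epi_iff_surjective.mpr hα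
  exact SimplexCategory.eq_id_of_epi α

variable {K K' : SSet} {n : ℕ} (σ : K.obj (op (SimplexCategory.mk n))) (ι : K' ⟶ K)

lemma nondeg_iff (hmono : Mono ι)
    (himage : ∀ m : ℕ, Set.range (ι.app (op (SimplexCategory.mk m))) =
      {τ : K.obj (op (SimplexCategory.mk m)) |
        ¬ ∃ α : SimplexCategory.mk m ⟶ SimplexCategory.mk n,
          Function.Surjective α.toOrderHom ∧ τ = K.map α.op σ})
    (m : ℕ) (τ : K'.obj (op (SimplexCategory.mk m))) :
    K'.Nondeg m τ ↔ K.Nondeg m (ι.app _ τ) := by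
  cases m with
  | zero => simp [SSet.Nondeg]
  | succ m =>
    simp only [SSet.Nondeg]
    constructor
    · intro h hdeg
      obtain ⟨i, ρ, hρ⟩ := hdeg
      have hρi : ρ ∈ Set.range (ι.app (op (SimplexCategory.mk m))) := by
        rw [himage m]
        rintro ⟨α, hα, rfl⟩
        have hmem : ι.app _ τ ∈ Set.range (ι.app (op (SimplexCategory.mk (m+1)))) := ⟨τ, rfl⟩
        rw [himage (m+1)] at hmem
        refine hmem ⟨SimplexCategory.σ i ≫ α, hα.comp (sigma_surj i), ?_⟩
        rw [hρ, op_comp, FunctorToTypes.map_comp_apply]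
      obtain ⟨ρ', rfl⟩ := hρi
      refine h ⟨i, ρ', ?_⟩
      apply inj_app ι hmono
      rw [hρ, FunctorToTypes.naturality]
    · rintro h ⟨i, ρ', hρ'⟩
      exact h ⟨i, ι.app _ ρ', by rw [hρ', FunctorToTypes.naturality]⟩

lemma card_eq_of_range (hmono : Mono ι)
    (himage : ∀ m : ℕ, Set.range (ι.app (op (SimplexCategory.mk m))) =
      {τ : K.obj (op (SimplexCategory.mk m)) |
        ¬ ∃ α : SimplexCategory.mk m ⟶ SimplexCategory.mk n,
          Function.Surjective α.toOrderHom ∧ τ = K.map α.op σ})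
    (m : ℕ) (x : K'.obj (op (SimplexCategory.mk 0)))
    (hr : ∀ τ : K.obj (op (SimplexCategory.mk m)), K.Nondeg m τ →
      K.initVertex m τ = ι.app _ x → τ ∈ Set.range (ι.app (op (SimplexCategory.mk m)))) :
    Nat.card {τ : K.obj (op (SimplexCategory.mk m)) //
        K.Nondeg m τ ∧ K.initVertex m τ = ι.app _ x} =
      Nat.card {τ' : K'.obj (op (SimplexCategory.mk m)) //
        K'.Nondeg m τ' ∧ K'.initVertex m τ' = x} := by
  refine (Nat.card_congr (Equiv.ofBijective
    (fun τ' => (⟨ι.app _ τ'.1, (nondeg_iff σ ι hmono himage m τ'.1).mp τ'.2.1,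
      by rw [← init_nat, τ'.2.2]⟩ :
      {τ : K.obj (op (SimplexCategory.mk m)) //
        K.Nondeg m τ ∧ K.initVertex m τ = ι.app _ x})) ⟨?_, ?_⟩)).symm
  · intro a b hab
    exact Subtype.ext (inj_app ι hmono _ (congrArg Subtype.val hab))
  · rintro ⟨τ, hnd, hin⟩
    obtain ⟨τ', rfl⟩ := hr τ hnd hin
    exact ⟨⟨τ', (nondeg_iff σ ι hmono himage m τ').mpr hnd,
      inj_app ι hmono _ (by rw [init_nat, hin])⟩, rfl⟩

lemma card_eq (hK : K.FinNondeg) (hn : 1 ≤ n)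
    (hdim : ∀ m > n, ∀ τ : K.obj (op (SimplexCategory.mk m)), ¬ K.Nondeg m τ)
    (hσ : K.Nondeg n σ) (hmono : Mono ι)
    (himage : ∀ m : ℕ, Set.range (ι.app (op (SimplexCategory.mk m))) =
      {τ : K.obj (op (SimplexCategory.mk m)) |
        ¬ ∃ α : SimplexCategory.mk m ⟶ SimplexCategory.mk n,
          Function.Surjective α.toOrderHom ∧ τ = K.map α.op σ})
    (m : ℕ) (x : K'.obj (op (SimplexCategory.mk 0))) :
    Nat.card {τ : K.obj (op (SimplexCategory.mk m)) //
        K.Nondeg m τ ∧ K.initVertex m τ = ι.app _ x} =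
      Nat.card {τ' : K'.obj (op (SimplexCategory.mk m)) //
        K'.Nondeg m τ' ∧ K'.initVertex m τ' = x} +
      (if m = n ∧ ι.app _ x = K.initVertex n σ then 1 else 0) := by
  by_cases hc : m = n
  · subst hc
    by_cases hx : ι.app _ x = K.initVertex m σ
    · rw [if_pos ⟨rfl, hx⟩]
      have hσnr : σ ∉ Set.range (ι.app (op (SimplexCategory.mk m))) := by
        rw [himage m]
        intro h
        exact h ⟨𝟙 _, Function.surjective_id, by simp⟩
      set A : Set (K.obj (op (SimplexCategory.mk m))) :=
        {τ | K.Nondeg m τ ∧ K.initVertex m τ = ι.app _ x} with hA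
      have hσA : σ ∈ A := ⟨hσ, hx.symm⟩
      have hAfin : A.Finite := (hK.1 m).subset (fun τ hτ => hτ.1)
      have e : {τ' : K'.obj (op (SimplexCategory.mk m)) //
          K'.Nondeg m τ' ∧ K'.initVertex m τ' = x} ≃ ↥(A \ {σ}) := by
        refine Equiv.ofBijective (fun τ' => ⟨ι.app _ τ'.1,
          ⟨⟨(nondeg_iff σ ι hmono himage m τ'.1).mp τ'.2.1, by rw [← init_nat, τ'.2.2]⟩,
            fun hmem => hσnr (hmem ▸ ⟨τ'.1, rfl⟩)⟩⟩) ⟨?_, ?_⟩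
        · intro a b hab
          exact Subtype.ext (inj_app ι hmono _ (congrArg Subtype.val hab))
        · rintro ⟨τ, ⟨hnd, hin⟩, hne⟩
          have hτr : τ ∈ Set.range (ι.app (op (SimplexCategory.mk m))) := by
            rw [himage m]
            rintro ⟨α, hα, rfl⟩
            refine hne ?_
            rw [alpha_eq_id α hα]
            simp
          obtain ⟨τ', rfl⟩ := hτr
          exact ⟨⟨τ', (nondeg_iff σ ι hmono himage m τ').mpr hnd,
            inj_app ι hmono _ (by rw [init_nat, hin])⟩, rfl⟩
      rw [Nat.card_congr e]
      have h1 : (A \ {σ}).ncard + 1 = A.ncard := Set.ncard_diff_singleton_add_one hσA hAfin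
      have h2 : Nat.card {τ : K.obj (op (SimplexCategory.mk m)) //
          K.Nondeg m τ ∧ K.initVertex m τ = ι.app _ x} = A.ncard :=
        (Nat.card_coe_set_eq A).symm ▸ rfl
      rw [h2, ← h1, Nat.card_coe_set_eq]
    · have hr : ∀ τ : K.obj (op (SimplexCategory.mk m)), K.Nondeg m τ →
          K.initVertex m τ = ι.app _ x → τ ∈ Set.range (ι.app (op (SimplexCategory.mk m))) := by
        intro τ hnd hin
        rw [himage m]
        rintro ⟨α, hα, rfl⟩
        rw [alpha_eq_id α hα] at hin
        simp only [op_id, FunctorToTypes.map_id_apply] at hin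
        exact hx hin.symm
      rw [if_neg (by tauto), card_eq_of_range σ ι hmono himage m x hr, add_zero]
  · have hr : ∀ τ : K.obj (op (SimplexCategory.mk m)), K.Nondeg m τ →
        K.initVertex m τ = ι.app _ x → τ ∈ Set.range (ι.app (op (SimplexCategory.mk m))) := by
      intro τ hnd hin
      rw [himage m]
      rintro ⟨α, hα, rfl⟩
      by_cases hgt : m > n
      · exact hdim m hgt _ hnd
      · exact hc (dim_eq α hα hgt)
    rw [if_neg (by tauto), card_eq_of_range σ ι hmono himage m x hr, add_zero]

lemma mob_eq (hK : K.FinNondeg) (hn : 1 ≤ n)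
    (hdim : ∀ m > n, ∀ τ : K.obj (op (SimplexCategory.mk m)), ¬ K.Nondeg m τ)
    (hσ : K.Nondeg n σ) (hmono : Mono ι)
    (himage : ∀ m : ℕ, Set.range (ι.app (op (SimplexCategory.mk m))) =
      {τ : K.obj (op (SimplexCategory.mk m)) |
        ¬ ∃ α : SimplexCategory.mk m ⟶ SimplexCategory.mk n,
          Function.Surjective α.toOrderHom ∧ τ = K.map α.op σ})
    (x : K'.obj (op (SimplexCategory.mk 0))) :
    K.mob (ι.app _ x) = K'.mob x +
      (if ι.app _ x = K.initVertex n σ then (-1 : ℤ) ^ n else 0) := by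
  classical
  obtain ⟨N, hN⟩ := hK.2
  set g : ℕ → ℤ := fun m => (-1 : ℤ) ^ m *
    (Nat.card {τ' : K'.obj (op (SimplexCategory.mk m)) //
      K'.Nondeg m τ' ∧ K'.initVertex m τ' = x} : ℤ) with hg
  set h : ℕ → ℤ := fun m =>
    if m = n ∧ ι.app _ x = K.initVertex n σ then (-1 : ℤ) ^ n else 0 with hh
  have hgsupp : (Function.support g).Finite := by
    refine (Set.finite_Iio N).subset fun m hm => ?_
    by_contra hlt
    simp only [Set.mem_Iio, not_lt] at hlt
    have : IsEmpty {τ' : K'.obj (op (SimplexCategory.mk m)) //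
        K'.Nondeg m τ' ∧ K'.initVertex m τ' = x} :=
      ⟨fun ⟨τ', hτ', _⟩ => hN m hlt _ ((nondeg_iff σ ι hmono himage m τ').mp hτ')⟩
    apply hm
    simp [hg, Nat.card_of_isEmpty]
  have hhsupp : (Function.support h).Finite := by
    refine (Set.finite_singleton n).subset fun m hm => ?_
    by_contra hne
    apply hm
    have hnc : ¬ (m = n ∧ ι.app _ x = K.initVertex n σ) := fun hc => hne (by simp [hc.1])
    simp only [hh, if_neg hnc]
  have hfg : ∀ m, (-1 : ℤ) ^ m *
      (Nat.card {τ : K.obj (op (SimplexCategory.mk m)) //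
        K.Nondeg m τ ∧ K.initVertex m τ = ι.app _ x} : ℤ) = g m + h m := by
    intro m
    rw [card_eq σ ι hK hn hdim hσ hmono himage m x]
    simp only [hg, hh]
    by_cases hc : m = n ∧ ι.app _ x = K.initVertex n σ
    · obtain ⟨rfl, hcx⟩ := hc
      rw [if_pos ⟨rfl, hcx⟩, if_pos ⟨rfl, hcx⟩]
      push_cast
      ring
    · rw [if_neg hc, if_neg hc]
      push_cast
      ring
  have : K.mob (ι.app _ x) = ∑ᶠ m, (g m + h m) := finsum_congr hfg
  rw [this, finsum_add_distrib hgsupp hhsupp]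
  congr 1
  by_cases hx : ι.app _ x = K.initVertex n σ
  · rw [if_pos hx]
    rw [finsum_eq_single h n (fun m hm => by
      simp only [hh]
      exact if_neg fun hc => hm hc.1)]
    simp [hh, hx]
  · rw [if_neg hx]
    refine finsum_eq_zero_of_forall_eq_zero fun m => ?_
    simp only [hh]
    exact if_neg fun hc => hx hc.2

end MobAux

/-- Removing a top-dimensional nondegenerate `n`-simplex `σ` (with `n ≥ 1` and initial
vertex `s`) from a finite simplicial set `K` yields a simplicial subset `K′` (the one
generated by all other nondegenerate simplices, whose `m`-simplices are exactly those
simplices of `K` that are not degeneracies of `σ`). Then `K` and `K′` have the same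
vertices, their Möbius functions agree away from `s`, and `μ(s) = μ′(s) + (−1)ⁿ`. -/
theorem mob_remove_top_simplex (K K' : SSet) (hK : K.FinNondeg) (n : ℕ) (hn : 1 ≤ n)
    (hdim : ∀ m > n, ∀ τ : K.obj (op (SimplexCategory.mk m)), ¬ K.Nondeg m τ)
    (σ : K.obj (op (SimplexCategory.mk n))) (hσ : K.Nondeg n σ)
    (ι : K' ⟶ K) (hmono : CategoryTheory.Mono ι)
    (himage : ∀ m : ℕ, Set.range (ι.app (op (SimplexCategory.mk m))) =
      {τ : K.obj (op (SimplexCategory.mk m)) |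
        ¬ ∃ α : SimplexCategory.mk m ⟶ SimplexCategory.mk n,
          Function.Surjective α.toOrderHom ∧ τ = K.map α.op σ}) :
    Function.Bijective (ι.app (op (SimplexCategory.mk 0))) ∧
    (∀ x : K'.obj (op (SimplexCategory.mk 0)),
      ι.app (op (SimplexCategory.mk 0)) x ≠ K.initVertex n σ →
        K.mob (ι.app (op (SimplexCategory.mk 0)) x) = K'.mob x) ∧
    (∀ x : K'.obj (op (SimplexCategory.mk 0)),
      ι.app (op (SimplexCategory.mk 0)) x = K.initVertex n σ →
        K.mob (ι.app (op (SimplexCategory.mk 0)) x) = K'.mob x + (-1 : ℤ) ^ n) := by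
  refine ⟨⟨MobAux.inj_app ι hmono _, ?_⟩, fun x hx => ?_, fun x hx => ?_⟩
  · intro y
    have hy : y ∈ Set.range (ι.app (op (SimplexCategory.mk 0))) := by
      rw [himage 0]
      rintro ⟨α, hα, -⟩
      obtain ⟨a, ha⟩ := hα 0
      obtain ⟨b, hb⟩ := hα ⟨1, by simp only [SimplexCategory.len_mk]; omega⟩
      have hab : a = b := by
        apply Fin.ext
        have ha' : a.val < 0 + 1 := a.isLt
        have hb' : b.val < 0 + 1 := b.isLt
        omega
      rw [hab, hb] at ha
      have := congrArg Fin.val ha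
      simp at this
    exact hy
  · rw [MobAux.mob_eq σ ι hK hn hdim hσ hmono himage x, if_neg hx, add_zero]
  · rw [MobAux.mob_eq σ ι hK hn hdim hσ hmono himage x, if_pos hx]
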